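/- Multidimensional discrete isothermic nets: hexahedron characterization (Theorem 'Multidimensional discrete isothermic nets', local form): Let E be a Euclidean space of dimension N ≥ 3, and let f, f₁, f₂, f₃, f₁₂, f₁₃, f₂₃, f₁₂₃ ∈ E be eight pairwise distinct points forming a combinatorial cube such that each of the six face quadruples {f, f₁, f₁₂, f₂}, {f, f₂, f₂₃, f₃}, {f, f₁, f₁₃, f₃}, {f₁, f₁₂, f₁₂₃, f₁₃}, {f₂, f₁₂, f₁₂₃, f₂₃}, {f₃, f₁₃, f₁₂₃, f₂₃} is concyclic (its four points lie on a common circle). Assume moreover that no three of the eight points are collinear and that the eight points do not all lie on a single circle. Then the four 'black' vertices f, f₁₂, f₁₃, f₂₃ are concyclic if and only if the four 'white' vertices f₁, f₂, f₃, f₁₂₃ are concyclic. -/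

import Mathlib

open EuclideanGeometry

/-! # Multidimensional discrete isothermic nets: hexahedron characterization

The proof lifts all points to the paraboloid `p ↦ (p, ‖p‖²)`: a quadruple of
points (no three collinear) is concyclic iff the lifted points are coplanar.
The statement then becomes a fact of affine geometry, proved via explicit
coordinates and a polynomial identity. -/

section ModuleHelpers

variable {F : Type*} [AddCommGroup F] [Module ℝ F]

lemma rank_span_pair_le' (a b : F) :
    Module.rank ℝ (Submodule.span ℝ ({a, b} : Set F)) ≤ 2 := by
  refine (rank_span_le _).trans ?_
  refine (Cardinal.mk_insert_le).trans ?_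
  simp
  norm_num

lemma collinear_of_combo (p₀ p₁ p₂ : F) (c : ℝ) (h : p₂ - p₀ = c • (p₁ - p₀)) :
    Collinear ℝ ({p₀, p₁, p₂} : Set F) := by
  rw [collinear_iff_exists_forall_eq_smul_vadd]
  refine ⟨p₀, p₁ - p₀, ?_⟩
  intro p hp
  simp only [Set.mem_insert_iff, Set.mem_singleton_iff] at hp
  rcases hp with hp | hp | hp <;> rw [hp]
  · exact ⟨0, by simp⟩
  · exact ⟨1, by simp⟩
  · exact ⟨c, by rw [← h]; simp⟩

lemma li_pair_of_not_collinear {p₀ p₁ p₂ : F}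
    (h : ¬ Collinear ℝ ({p₀, p₁, p₂} : Set F)) :
    LinearIndependent ℝ ![p₁ - p₀, p₂ - p₀] := by
  rw [LinearIndependent.pair_iff]
  intro s t hst
  by_contra hc
  push_neg at hc
  apply h
  rw [collinear_iff_exists_forall_eq_smul_vadd]
  by_cases ht : t = 0
  · have hs : s ≠ 0 := by tauto
    have hp1 : p₁ = p₀ := by
      have h0 : s • (p₁ - p₀) = 0 := by rw [ht] at hst; simpa using hst
      rcases smul_eq_zero.mp h0 with h' | h'
      · exact absurd h' hs
      · have h'' : p₁ - p₀ = 0 := h'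
        linear_combination (norm := abel) h''
    refine ⟨p₀, p₂ - p₀, ?_⟩
    intro p hp
    simp only [Set.mem_insert_iff, Set.mem_singleton_iff] at hp
    rcases hp with hp | hp | hp <;> rw [hp]
    · exact ⟨0, by simp⟩
    · exact ⟨0, by simp [hp1]⟩
    · exact ⟨1, by simp⟩
  · refine ⟨p₀, p₁ - p₀, ?_⟩
    intro p hp
    simp only [Set.mem_insert_iff, Set.mem_singleton_iff] at hp
    rcases hp with hp | hp | hp <;> rw [hp]
    · exact ⟨0, by simp⟩
    · exact ⟨1, by simp⟩
    · refine ⟨-s / t, ?_⟩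
      have key : p₂ - p₀ = (-s / t) • (p₁ - p₀) := by
        have h2 : t • (p₂ - p₀) = (-s) • (p₁ - p₀) := by
          linear_combination (norm := module) hst
        calc p₂ - p₀ = (t⁻¹ * t) • (p₂ - p₀) := by rw [inv_mul_cancel₀ ht]; simp
        _ = t⁻¹ • (t • (p₂ - p₀)) := by rw [mul_smul]
        _ = t⁻¹ • ((-s) • (p₁ - p₀)) := by rw [h2]
        _ = (-s / t) • (p₁ - p₀) := by rw [smul_smul]; ring_nf
      rw [← key]; simp

lemma solve_combo (v₁ v₂ v₃ : F) (g0 g1 g2 : ℝ) (h0 : g0 ≠ 0)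
    (h : g0 • v₁ + g1 • v₂ + g2 • v₃ = 0) :
    v₁ = (-g1/g0) • v₂ + (-g2/g0) • v₃ := by
  have h2 : v₁ = g0⁻¹ • (g0 • v₁) := by rw [smul_smul, inv_mul_cancel₀ h0, one_smul]
  rw [h2]
  have h3 : g0 • v₁ = (-g1) • v₂ + (-g2) • v₃ := by linear_combination (norm := module) h
  rw [h3, smul_add, smul_smul, smul_smul]
  congr 2 <;> field_simp

lemma rank_span_triple_le (a b c : F) (s t : ℝ) (h : c = s • a + t • b) :
    Module.rank ℝ (Submodule.span ℝ ({a, b, c} : Set F)) ≤ 2 := by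
  have hle : Submodule.span ℝ ({a, b, c} : Set F) ≤ Submodule.span ℝ ({a, b} : Set F) := by
    rw [Submodule.span_le]
    intro x hx
    simp only [Set.mem_insert_iff, Set.mem_singleton_iff] at hx
    rcases hx with hx | hx | hx <;> rw [hx]
    · exact Submodule.subset_span (by simp)
    · exact Submodule.subset_span (by simp)
    · exact Submodule.mem_span_pair.mpr ⟨s, t, h.symm⟩
  exact (Submodule.rank_mono hle).trans (rank_span_pair_le' _ _)

lemma rank_span_triple_le_of_rel (v₁ v₂ v₃ : F) (g : Fin 3 → ℝ)
    (hg : g 0 • v₁ + g 1 • v₂ + g 2 • v₃ = 0) (i : Fin 3) (hgi : g i ≠ 0) :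
    Module.rank ℝ (Submodule.span ℝ ({v₁, v₂, v₃} : Set F)) ≤ 2 := by
  fin_cases i
  · have hc := solve_combo v₁ v₂ v₃ (g 0) (g 1) (g 2) hgi hg
    have hs : ({v₁, v₂, v₃} : Set F) = {v₂, v₃, v₁} := by ext w; simp; tauto
    rw [hs]; exact rank_span_triple_le _ _ _ _ _ hc
  · have hg' : g 1 • v₂ + g 0 • v₁ + g 2 • v₃ = 0 := by
      linear_combination (norm := module) hg
    have hc := solve_combo v₂ v₁ v₃ (g 1) (g 0) (g 2) hgi hg'
    have hs : ({v₁, v₂, v₃} : Set F) = {v₁, v₃, v₂} := by ext w; simp; tauto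
    rw [hs]; exact rank_span_triple_le _ _ _ _ _ hc
  · have hg' : g 2 • v₃ + g 0 • v₁ + g 1 • v₂ = 0 := by
      linear_combination (norm := module) hg
    have hc := solve_combo v₃ v₁ v₂ (g 2) (g 0) (g 1) hgi hg'
    exact rank_span_triple_le _ _ _ _ _ hc

lemma vectorSpan_quad (p q r t : F) :
    vectorSpan ℝ ({p, q, r, t} : Set F)
      = Submodule.span ℝ ({q - p, r - p, t - p} : Set F) := by
  rw [vectorSpan_eq_span_vsub_set_right ℝ (Set.mem_insert p _)]
  have himg : (fun x => x -ᵥ p) '' ({p, q, r, t} : Set F)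
      = ({0, q - p, r - p, t - p} : Set F) := by
    simp [Set.image_insert_eq, vsub_eq_sub, Set.image_singleton, sub_self]
  rw [himg, Submodule.span_insert_zero]

lemma coplanar_of_relation (p q r t : F) (g : Fin 3 → ℝ)
    (hg : g 0 • (q - p) + g 1 • (r - p) + g 2 • (t - p) = 0)
    (i : Fin 3) (hgi : g i ≠ 0) :
    Coplanar ℝ ({p, q, r, t} : Set F) := by
  show Module.rank ℝ (vectorSpan ℝ ({p, q, r, t} : Set F)) ≤ 2
  rw [vectorSpan_quad]
  exact rank_span_triple_le_of_rel _ _ _ g hg i hgi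

lemma range_triple (a b c : F) : Set.range ![a, b, c] = ({a, b, c} : Set F) := by
  ext x; simp [Matrix.range_cons, Matrix.range_empty]; tauto

lemma range_pair (a b : F) : Set.range ![a, b] = ({a, b} : Set F) := by
  ext x; simp [Matrix.range_cons, Matrix.range_empty]; tauto

lemma mem_span_pair_of_coplanar (s : Set F) (hc : Coplanar ℝ s) (p₀ p₁ p₂ p₃ : F)
    (h₀ : p₀ ∈ s) (h₁ : p₁ ∈ s) (h₂ : p₂ ∈ s) (h₃ : p₃ ∈ s)
    (hli : LinearIndependent ℝ ![p₁ - p₀, p₂ - p₀]) :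
    ∃ a b : ℝ, p₃ - p₀ = a • (p₁ - p₀) + b • (p₂ - p₀) := by
  have hrank : Module.rank ℝ (vectorSpan ℝ s) ≤ 2 := hc
  haveI hfd : FiniteDimensional ℝ (vectorSpan ℝ s) :=
    Module.rank_lt_aleph0_iff.mp (lt_of_le_of_lt hrank (Cardinal.nat_lt_aleph0 2))
  have hfinW : Module.finrank ℝ (vectorSpan ℝ s) ≤ 2 := by
    apply Module.finrank_le_of_rank_le
    exact_mod_cast hrank
  have hVW : Submodule.span ℝ ({p₁ - p₀, p₂ - p₀} : Set F) ≤ vectorSpan ℝ s := by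
    rw [Submodule.span_le]
    intro x hx
    simp only [Set.mem_insert_iff, Set.mem_singleton_iff] at hx
    rcases hx with hx | hx <;> rw [hx]
    · simpa [vsub_eq_sub] using vsub_mem_vectorSpan ℝ h₁ h₀
    · simpa [vsub_eq_sub] using vsub_mem_vectorSpan ℝ h₂ h₀
  have hfinV : Module.finrank ℝ (Submodule.span ℝ ({p₁ - p₀, p₂ - p₀} : Set F)) = 2 := by
    rw [← range_pair]
    rw [finrank_span_eq_card hli]
    simp
  have heq : Submodule.span ℝ ({p₁ - p₀, p₂ - p₀} : Set F) = vectorSpan ℝ s := by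
    apply Submodule.eq_of_le_of_finrank_le hVW
    rw [hfinV]; exact hfinW
  have hmem : p₃ - p₀ ∈ Submodule.span ℝ ({p₁ - p₀, p₂ - p₀} : Set F) := by
    rw [heq]
    simpa [vsub_eq_sub] using vsub_mem_vectorSpan ℝ h₃ h₀
  obtain ⟨a, b, hab⟩ := Submodule.mem_span_pair.mp hmem
  exact ⟨a, b, hab.symm⟩

lemma det_eq_zero_of_coplanar (s : Set F) (hc : Coplanar ℝ s)
    (u₁ u₂ u₃ : F) (hu : LinearIndependent ℝ ![u₁, u₂, u₃])
    (p q r t : F) (hp : p ∈ s) (hq : q ∈ s) (hr : r ∈ s) (ht : t ∈ s)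
    (m : Matrix (Fin 3) (Fin 3) ℝ)
    (h1 : q - p = m 0 0 • u₁ + m 0 1 • u₂ + m 0 2 • u₃)
    (h2 : r - p = m 1 0 • u₁ + m 1 1 • u₂ + m 1 2 • u₃)
    (h3 : t - p = m 2 0 • u₁ + m 2 1 • u₂ + m 2 2 • u₃) :
    m.det = 0 := by
  have hnli : ¬ LinearIndependent ℝ ![q - p, r - p, t - p] := by
    intro hli
    have hle : Submodule.span ℝ ({q - p, r - p, t - p} : Set F) ≤ vectorSpan ℝ s := by
      rw [Submodule.span_le]
      intro x hx
      simp only [Set.mem_insert_iff, Set.mem_singleton_iff] at hx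
      rcases hx with hx | hx | hx <;> rw [hx]
      · simpa [vsub_eq_sub] using vsub_mem_vectorSpan ℝ hq hp
      · simpa [vsub_eq_sub] using vsub_mem_vectorSpan ℝ hr hp
      · simpa [vsub_eq_sub] using vsub_mem_vectorSpan ℝ ht hp
    have h3' : Module.rank ℝ (Submodule.span ℝ ({q - p, r - p, t - p} : Set F)) = 3 := by
      rw [← range_triple, rank_span_set hli.linearIndepOn_id]
      have h2 := Cardinal.mk_range_eq_of_injective hli.injective
      simp at h2
      simp [h2]
    have : (3 : Cardinal) ≤ 2 := by
      rw [← h3']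
      exact (Submodule.rank_mono hle).trans hc
    norm_num at this
  obtain ⟨g, hsum, i, hgi⟩ := Fintype.not_linearIndependent_iff.mp hnli
  rw [Fin.sum_univ_three] at hsum
  simp only [Matrix.cons_val_zero, Matrix.cons_val_one, Matrix.head_cons,
    Matrix.cons_val_two, Matrix.tail_cons] at hsum
  rw [h1, h2, h3] at hsum
  have hk : ∀ j : Fin 3, g 0 * m 0 j + g 1 * m 1 j + g 2 * m 2 j = 0 := by
    have happ := Fintype.linearIndependent_iff.mp hu
      ![g 0 * m 0 0 + g 1 * m 1 0 + g 2 * m 2 0,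
        g 0 * m 0 1 + g 1 * m 1 1 + g 2 * m 2 1,
        g 0 * m 0 2 + g 1 * m 1 2 + g 2 * m 2 2]
      (by
        rw [Fin.sum_univ_three]
        simp only [Matrix.cons_val_zero, Matrix.cons_val_one, Matrix.head_cons,
          Matrix.cons_val_two, Matrix.tail_cons]
        linear_combination (norm := module) hsum)
    intro j
    fin_cases j
    · simpa using happ 0
    · simpa using happ 1
    · simpa using happ 2
  apply Matrix.exists_vecMul_eq_zero_iff.mp
  refine ⟨g, Function.ne_iff.mpr ⟨i, by simpa using hgi⟩, ?_⟩
  funext j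
  simp only [Matrix.vecMul, dotProduct, Fin.sum_univ_three]
  exact hk j

lemma coplanar_of_det (p q r t u₁ u₂ u₃ : F)
    (m : Matrix (Fin 3) (Fin 3) ℝ)
    (h1 : q - p = m 0 0 • u₁ + m 0 1 • u₂ + m 0 2 • u₃)
    (h2 : r - p = m 1 0 • u₁ + m 1 1 • u₂ + m 1 2 • u₃)
    (h3 : t - p = m 2 0 • u₁ + m 2 1 • u₂ + m 2 2 • u₃)
    (hdet : m.det = 0) :
    Coplanar ℝ ({p, q, r, t} : Set F) := by
  obtain ⟨g, hg0, hvm⟩ := Matrix.exists_vecMul_eq_zero_iff.mpr hdet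
  obtain ⟨i, hgi⟩ := Function.ne_iff.mp hg0
  have hk : ∀ j : Fin 3, g 0 * m 0 j + g 1 * m 1 j + g 2 * m 2 j = 0 := by
    intro j
    have := congrFun hvm j
    simpa [Matrix.vecMul, dotProduct, Fin.sum_univ_three] using this
  have hrel : g 0 • (q - p) + g 1 • (r - p) + g 2 • (t - p) = 0 := by
    rw [h1, h2, h3]
    linear_combination (norm := module) (hk 0) • u₁ + (hk 1) • u₂ + (hk 2) • u₃
  exact coplanar_of_relation p q r t g hrel i (by simpa using hgi)

end ModuleHelpers

lemma key_identity (a1 a2 b1 b3 c2 c3 x y z : ℝ)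
    (h4 : (1)*b3*y + (1)*a2*z + (-1)*a2*b3 + (1)*a2*b3*x + (-1)*a2*b1*z + (-1)*a1*b3*y = 0)
    (h5 : (-1)*c3*x + (1)*a2*c3*x + (-1)*a1*z + (1)*a1*c3 + (-1)*a1*c3*y + (1)*a1*c2*z = 0)
    (h6 : (1)*c2*x + (-1)*b3*c2*x + (1)*b1*y + (-1)*b1*c3*y + (-1)*b1*c2 + (1)*b1*c2*z = 0)
    (hw : x + y + z = 1) :
    (1 - a1 - a2) * (1 - b1 - b3) * (1 - c2 - c3) * (a1*b3*c2 + a2*b1*c3) = 0 := by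
  linear_combination ((1)*b1*b3*c2*c3 + (-1)*a2*b1*c3 + (1)*a2*b1*c3*c3 + (-1)*a2*b1*b3*c2*c3 + (1)*a2*b1*b1*c3 + (-1)*a2*b1*b1*c3*c3 + (1)*a2*a2*b1*c3 + (-1)*a2*a2*b1*c3*c3 + (-1)*a2*a2*b1*b1*c3 + (1)*a2*a2*b1*b1*c3*c3 + (-1)*a1*b3*c2 + (1)*a1*b3*c2*c2 + (1)*a1*b3*b3*c2 + (-1)*a1*b3*b3*c2*c2 + (-1)*a1*b1*b3*c2*c3 + (1)*a1*a2*c2*c3 + (-1)*a1*a2*b3*c2*c3 + (-1)*a1*a2*b1*c2*c3 + (1)*a1*a2*b1*b3 + (-1)*a1*a2*b1*b3*c3 + (-1)*a1*a2*b1*b3*c2 + (2)*a1*a2*b1*b3*c2*c3 + (1)*a1*a1*b3*c2 + (-1)*a1*a1*b3*c2*c2 + (-1)*a1*a1*b3*b3*c2 + (1)*a1*a1*b3*b3*c2*c2) * hw - ((-1)*b1*c3 + (1)*b1*c3*c3 + (1)*b1*c2*c3 + (1)*a2*b1*c3 + (-1)*a2*b1*c3*c3 + (-1)*a2*b1*c2*c3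 + (-1)*a1*c2 + (1)*a1*c2*c3 + (1)*a1*c2*c2 + (1)*a1*b3*c2 + (-1)*a1*b3*c2*c3 + (-1)*a1*b3*c2*c2 + (1)*a1*b1 + (-1)*a1*b1*c3 + (-1)*a1*b1*c2) * h4 - ((1)*b3*c2 + (-1)*b3*b3*c2 + (-1)*b1*b3*c2 + (-1)*a2*c2 + (1)*a2*b3*c2 + (1)*a2*b1 + (-1)*a2*b1*c3 + (1)*a2*b1*c2 + (-1)*a2*b1*b3 + (1)*a2*b1*b3*c3 + (-1)*a2*b1*b1 + (1)*a2*b1*b1*c3 + (-1)*a1*b3*c2 + (1)*a1*b3*b3*c2 + (1)*a1*b1*b3*c2) * h5 - ((1)*b3*c3 + (-1)*a2*c3 + (-1)*a2*b3*c3 + (1)*a2*b1*c3 + (1)*a2*a2*c3 + (-1)*a2*a2*b1*c3 + (-1)*a1*b3 + (-1)*a1*b3*c3 + (1)*a1*b3*c2 + (1)*a1*a2*c3 + (1)*a1*a2*b3 + (-1)*a1*a2*b3*c2 + (-1)*a1*a2*b1*c3 + (1)*a1*a1*b3 + (-1)*a1*a1*b3*c2) * h6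


section CubeF

variable {F : Type*} [AddCommGroup F] [Module ℝ F]

/-- The master lemma, in linear-algebra form. -/
lemma cube_F (q q₁ q₂ q₃ q₁₂ q₁₃ q₂₃ q₁₂₃ : F)
    (hf1 : Coplanar ℝ ({q, q₁, q₁₂, q₂} : Set F))
    (hf2 : Coplanar ℝ ({q, q₂, q₂₃, q₃} : Set F))
    (hf3 : Coplanar ℝ ({q, q₁, q₁₃, q₃} : Set F))
    (hf4 : Coplanar ℝ ({q₁, q₁₂, q₁₂₃, q₁₃} : Set F))
    (hf5 : Coplanar ℝ ({q₂, q₁₂, q₁₂₃, q₂₃} : Set F))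
    (hf6 : Coplanar ℝ ({q₃, q₁₃, q₁₂₃, q₂₃} : Set F))
    (hn12 : ¬ Collinear ℝ ({q, q₁, q₂} : Set F))
    (hn13 : ¬ Collinear ℝ ({q, q₁, q₃} : Set F))
    (hn23 : ¬ Collinear ℝ ({q, q₂, q₃} : Set F))
    (hnA : ¬ Collinear ℝ ({q₁, q₁₂, q₁₃} : Set F))
    (hQ1 : ¬ Collinear ℝ ({q₁, q₂, q₁₂} : Set F))
    (hQ2 : ¬ Collinear ℝ ({q₁, q₃, q₁₃} : Set F))
    (hQ3 : ¬ Collinear ℝ ({q₂, q₃, q₂₃} : Set F))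
    (hnotall : ¬ Coplanar ℝ ({q, q₁, q₂, q₃, q₁₂, q₁₃, q₂₃, q₁₂₃} : Set F))
    (hwhite : Coplanar ℝ ({q₁, q₂, q₃, q₁₂₃} : Set F)) :
    Coplanar ℝ ({q, q₁₂, q₁₃, q₂₃} : Set F) := by
  -- coordinates from the three faces through q
  obtain ⟨a₁, a₂, ha⟩ := mem_span_pair_of_coplanar _ hf1 q q₁ q₂ q₁₂
    (by simp) (by simp) (by simp) (by simp) (li_pair_of_not_collinear hn12)
  obtain ⟨b₁, b₃, hb⟩ := mem_span_pair_of_coplanar _ hf3 q q₁ q₃ q₁₃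
    (by simp) (by simp) (by simp) (by simp) (li_pair_of_not_collinear hn13)
  obtain ⟨c₂, c₃, hc⟩ := mem_span_pair_of_coplanar _ hf2 q q₂ q₃ q₂₃
    (by simp) (by simp) (by simp) (by simp) (li_pair_of_not_collinear hn23)
  obtain ⟨α, β, hαβ⟩ := mem_span_pair_of_coplanar _ hf4 q₁ q₁₂ q₁₃ q₁₂₃
    (by simp) (by simp) (by simp) (by simp) (li_pair_of_not_collinear hnA)
  obtain ⟨x, hxd⟩ : ∃ x : ℝ, x = 1 + α*(a₁-1) + β*(b₁-1) := ⟨_, rfl⟩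
  obtain ⟨y, hyd⟩ : ∃ y : ℝ, y = α*a₂ := ⟨_, rfl⟩
  obtain ⟨z, hzd⟩ : ∃ z : ℝ, z = β*b₃ := ⟨_, rfl⟩
  have hx : q₁₂₃ - q = x • (q₁ - q) + y • (q₂ - q) + z • (q₃ - q) := by
    rw [hxd, hyd, hzd]
    linear_combination (norm := module) hαβ + α • ha + β • hb
  by_cases hLIu : LinearIndependent ℝ ![q₁ - q, q₂ - q, q₃ - q]
  · -- main branch
    -- determinant equations from the three faces through q₁₂₃ and the white quad
    have hE4 := det_eq_zero_of_coplanar _ hf4 (q₁ - q) (q₂ - q) (q₃ - q) hLIu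
      q₁ q₁₂ q₁₂₃ q₁₃ (by simp) (by simp) (by simp) (by simp)
      !![a₁ - 1, a₂, 0; x - 1, y, z; b₁ - 1, 0, b₃]
      (by simp; linear_combination (norm := module) ha)
      (by simp; linear_combination (norm := module) hx)
      (by simp; linear_combination (norm := module) hb)
    have hE5 := det_eq_zero_of_coplanar _ hf5 (q₁ - q) (q₂ - q) (q₃ - q) hLIu
      q₂ q₁₂ q₁₂₃ q₂₃ (by simp) (by simp) (by simp) (by simp)
      !![a₁, a₂ - 1, 0; x, y - 1, z; 0, c₂ - 1, c₃]
      (by simp; linear_combination (norm := module) ha)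
      (by simp; linear_combination (norm := module) hx)
      (by simp; linear_combination (norm := module) hc)
    have hE6 := det_eq_zero_of_coplanar _ hf6 (q₁ - q) (q₂ - q) (q₃ - q) hLIu
      q₃ q₁₃ q₁₂₃ q₂₃ (by simp) (by simp) (by simp) (by simp)
      !![b₁, 0, b₃ - 1; x, y, z - 1; 0, c₂, c₃ - 1]
      (by simp; linear_combination (norm := module) hb)
      (by simp; linear_combination (norm := module) hx)
      (by simp; linear_combination (norm := module) hc)
    have hWd := det_eq_zero_of_coplanar _ hwhite (q₁ - q) (q₂ - q) (q₃ - q) hLIu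
      q₁ q₂ q₃ q₁₂₃ (by simp) (by simp) (by simp) (by simp)
      !![-1, 1, 0; -1, 0, 1; x - 1, y, z]
      (by simp <;> module)
      (by simp <;> module)
      (by simp; linear_combination (norm := module) hx)
    rw [Matrix.det_fin_three] at hE4 hE5 hE6 hWd
    norm_num [Matrix.cons_val_zero, Matrix.cons_val_one, Matrix.head_cons,
      Matrix.cons_val_two, Matrix.tail_cons] at hE4 hE5 hE6 hWd
    have hw : x + y + z = 1 := by linarith [hWd]
    have hkey := key_identity a₁ a₂ b₁ b₃ c₂ c₃ x y z
      (by linear_combination -hE4) (by linear_combination -hE5) (by linear_combination -hE6) hw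
    -- the Q-factors are nonzero
    have hq1 : (1:ℝ) - a₁ - a₂ ≠ 0 := by
      intro h0
      apply hQ1
      apply collinear_of_combo q₁ q₂ q₁₂ a₂
      have h0' : a₁ + a₂ - 1 = 0 := by linarith
      linear_combination (norm := module) ha + h0' • (q₁ - q)
    have hq2 : (1:ℝ) - b₁ - b₃ ≠ 0 := by
      intro h0
      apply hQ2
      apply collinear_of_combo q₁ q₃ q₁₃ b₃
      have h0' : b₁ + b₃ - 1 = 0 := by linarith
      linear_combination (norm := module) hb + h0' • (q₁ - q)
    have hq3 : (1:ℝ) - c₂ - c₃ ≠ 0 := by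
      intro h0
      apply hQ3
      apply collinear_of_combo q₂ q₃ q₂₃ c₃
      have h0' : c₂ + c₃ - 1 = 0 := by linarith
      linear_combination (norm := module) hc + h0' • (q₂ - q)
    have hB : a₁*b₃*c₂ + a₂*b₁*c₃ = 0 := by
      rcases mul_eq_zero.mp hkey with h | h
      · exact absurd h (mul_ne_zero (mul_ne_zero hq1 hq2) hq3)
      · exact h
    exact coplanar_of_det q q₁₂ q₁₃ q₂₃ (q₁ - q) (q₂ - q) (q₃ - q)
      !![a₁, a₂, 0; b₁, 0, b₃; 0, c₂, c₃]
      (by simp; linear_combination (norm := module) ha)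
      (by simp; linear_combination (norm := module) hb)
      (by simp; linear_combination (norm := module) hc)
      (by rw [Matrix.det_fin_three]; simp; linear_combination -hB)
  · -- degenerate branch: all eight points would be coplanar
    exfalso
    apply hnotall
    obtain ⟨g, hsum, i, hgi⟩ := Fintype.not_linearIndependent_iff.mp hLIu
    rw [Fin.sum_univ_three] at hsum
    simp only [Matrix.cons_val_zero, Matrix.cons_val_one, Matrix.head_cons,
      Matrix.cons_val_two, Matrix.tail_cons] at hsum
    have hrank := rank_span_triple_le_of_rel (q₁ - q) (q₂ - q) (q₃ - q) g hsum i hgi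
    show Module.rank ℝ (vectorSpan ℝ ({q, q₁, q₂, q₃, q₁₂, q₁₃, q₂₃, q₁₂₃} : Set F)) ≤ 2
    rw [vectorSpan_eq_span_vsub_set_right ℝ (Set.mem_insert q _)]
    have hle : Submodule.span ℝ ((fun xx => xx -ᵥ q) '' ({q, q₁, q₂, q₃, q₁₂, q₁₃, q₂₃, q₁₂₃} : Set F))
        ≤ Submodule.span ℝ ({q₁ - q, q₂ - q, q₃ - q} : Set F) := by
      rw [Submodule.span_le]
      rintro w ⟨p, hp, rfl⟩
      have m1 : q₁ - q ∈ Submodule.span ℝ ({q₁ - q, q₂ - q, q₃ - q} : Set F) :=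
        Submodule.subset_span (by simp)
      have m2 : q₂ - q ∈ Submodule.span ℝ ({q₁ - q, q₂ - q, q₃ - q} : Set F) :=
        Submodule.subset_span (by simp)
      have m3 : q₃ - q ∈ Submodule.span ℝ ({q₁ - q, q₂ - q, q₃ - q} : Set F) :=
        Submodule.subset_span (by simp)
      have hm12 : q₁₂ - q ∈ Submodule.span ℝ ({q₁ - q, q₂ - q, q₃ - q} : Set F) := by
        rw [ha]; exact Submodule.add_mem _ (Submodule.smul_mem _ _ m1) (Submodule.smul_mem _ _ m2)
      have hm13 : q₁₃ - q ∈ Submodule.span ℝ ({q₁ - q, q₂ - q, q₃ - q} : Set F) := by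
        rw [hb]; exact Submodule.add_mem _ (Submodule.smul_mem _ _ m1) (Submodule.smul_mem _ _ m3)
      have hm23 : q₂₃ - q ∈ Submodule.span ℝ ({q₁ - q, q₂ - q, q₃ - q} : Set F) := by
        rw [hc]; exact Submodule.add_mem _ (Submodule.smul_mem _ _ m2) (Submodule.smul_mem _ _ m3)
      have hm123 : q₁₂₃ - q ∈ Submodule.span ℝ ({q₁ - q, q₂ - q, q₃ - q} : Set F) := by
        rw [hx]
        exact Submodule.add_mem _ (Submodule.add_mem _ (Submodule.smul_mem _ _ m1) (Submodule.smul_mem _ _ m2)) (Submodule.smul_mem _ _ m3)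
      have hspan : ∀ u : F, u - q ∈ Submodule.span ℝ ({q₁ - q, q₂ - q, q₃ - q} : Set F) →
          p = u → p -ᵥ q ∈ Submodule.span ℝ ({q₁ - q, q₂ - q, q₃ - q} : Set F) := by
        intro u hu hpu
        rw [hpu, vsub_eq_sub]
        exact hu
      simp only [Set.mem_insert_iff, Set.mem_singleton_iff] at hp
      rcases hp with hp | hp | hp | hp | hp | hp | hp | hp
      · exact hspan q (by simp) hp
      · exact hspan q₁ m1 hp
      · exact hspan q₂ m2 hp
      · exact hspan q₃ m3 hp
      · exact hspan q₁₂ hm12 hp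
      · exact hspan q₁₃ hm13 hp
      · exact hspan q₂₃ hm23 hp
      · exact hspan q₁₂₃ hm123 hp
    exact (Submodule.rank_mono hle).trans hrank


end CubeF

universe uE

section Lift

variable {E : Type uE} [NormedAddCommGroup E] [InnerProductSpace ℝ E]

/-- The lift of a point to the paraboloid. -/
noncomputable def parLift (p : E) : E × ℝ := (p, ‖p‖ ^ 2)

lemma coplanar_image {F G : Type uE} [AddCommGroup F] [Module ℝ F] [AddCommGroup G] [Module ℝ G]
    (ψ : F →ᵃ[ℝ] G) (s : Set F) (h : Coplanar ℝ s) : Coplanar ℝ (ψ '' s) := by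
  have h' : Module.rank ℝ (vectorSpan ℝ s) ≤ 2 := h
  show Module.rank ℝ (vectorSpan ℝ (ψ '' s)) ≤ 2
  have h1 : vectorSpan ℝ (ψ '' s) = (vectorSpan ℝ s).map ψ.linear := by
    rw [← direction_affineSpan, ← AffineSubspace.map_span, AffineSubspace.map_direction,
      direction_affineSpan]
  rw [h1]
  exact (rank_map_le ψ.linear (vectorSpan ℝ s)).trans h'

lemma collinear_image {F G : Type uE} [AddCommGroup F] [Module ℝ F] [AddCommGroup G] [Module ℝ G]
    (ψ : F →ᵃ[ℝ] G) (s : Set F) (h : Collinear ℝ s) : Collinear ℝ (ψ '' s) := by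
  have h' : Module.rank ℝ (vectorSpan ℝ s) ≤ 1 := h
  show Module.rank ℝ (vectorSpan ℝ (ψ '' s)) ≤ 1
  have h1 : vectorSpan ℝ (ψ '' s) = (vectorSpan ℝ s).map ψ.linear := by
    rw [← direction_affineSpan, ← AffineSubspace.map_span, AffineSubspace.map_direction,
      direction_affineSpan]
  rw [h1]
  exact (rank_map_le ψ.linear (vectorSpan ℝ s)).trans h'

/-- The affine map agreeing with `parLift` on a sphere with center `o`. -/
noncomputable def sphereLift (o : E) (c : ℝ) : E →ᵃ[ℝ] E × ℝ where
  toFun := fun x => (x, 2 * (inner ℝ o x : ℝ) + c)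
  linear :=
    { toFun := fun x => (x, 2 * (inner ℝ o x : ℝ))
      map_add' := by
        intro a b
        simp [inner_add_right]
        ring
      map_smul' := by
        intro r a
        simp [inner_smul_right]
        ring }
  map_vadd' := by
    intro p v
    simp [inner_add_right, Prod.ext_iff]
    ring

lemma concyclic_coplanar_lift {s : Set E} (h : Concyclic s) :
    Coplanar ℝ (parLift '' s) := by
  obtain ⟨⟨o, r, ho⟩, hcop⟩ := h
  have himg : parLift '' s = (sphereLift o (r ^ 2 - ‖o‖ ^ 2)) '' s := by
    apply Set.image_congr
    intro p hp
    have hd := ho p hp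
    rw [dist_eq_norm] at hd
    have h2 : ‖p - o‖ ^ 2 = r ^ 2 := by rw [hd]
    rw [norm_sub_sq_real] at h2
    have hio : (inner ℝ p o : ℝ) = (inner ℝ o p : ℝ) := real_inner_comm o p
    show (p, ‖p‖ ^ 2) = (p, 2 * (inner ℝ o p : ℝ) + (r ^ 2 - ‖o‖ ^ 2))
    rw [Prod.mk.injEq]
    exact ⟨rfl, by rw [← hio]; linarith⟩
  rw [himg]
  exact coplanar_image _ s hcop

lemma not_collinear_lift {p q r : E} (h : ¬ Collinear ℝ ({p, q, r} : Set E)) :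
    ¬ Collinear ℝ ({parLift p, parLift q, parLift r} : Set (E × ℝ)) := by
  intro hc
  apply h
  have h2 := collinear_image ((LinearMap.fst ℝ E ℝ).toAffineMap) _ hc
  simpa [Set.image_insert_eq, parLift] using h2

lemma concyclic_of_coplanar_lift (s : Set E) (p₀ p₁ p₂ : E)
    (h₀ : p₀ ∈ s) (h₁ : p₁ ∈ s) (h₂ : p₂ ∈ s)
    (hnc : ¬ Collinear ℝ ({p₀, p₁, p₂} : Set E))
    (hcop : Coplanar ℝ (parLift '' s)) :
    Concyclic s := by
  have hli : LinearIndependent ℝ ![parLift p₁ - parLift p₀, parLift p₂ - parLift p₀] :=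
    li_pair_of_not_collinear (not_collinear_lift hnc)
  have key : ∀ p ∈ s, ∃ a b : ℝ,
      p - p₀ = a • (p₁ - p₀) + b • (p₂ - p₀) ∧
      ‖p‖ ^ 2 - ‖p₀‖ ^ 2 = a * (‖p₁‖ ^ 2 - ‖p₀‖ ^ 2) + b * (‖p₂‖ ^ 2 - ‖p₀‖ ^ 2) := by
    intro p hp
    obtain ⟨a, b, hab⟩ := mem_span_pair_of_coplanar (parLift '' s) hcop
      (parLift p₀) (parLift p₁) (parLift p₂) (parLift p)
      (Set.mem_image_of_mem _ h₀) (Set.mem_image_of_mem _ h₁)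
      (Set.mem_image_of_mem _ h₂) (Set.mem_image_of_mem _ hp) hli
    refine ⟨a, b, ?_, ?_⟩
    · have hf := congrArg Prod.fst hab
      simpa [parLift] using hf
    · have hs := congrArg Prod.snd hab
      simpa [parLift, smul_eq_mul, mul_sub] using hs
  have hai : AffineIndependent ℝ ![p₀, p₁, p₂] := by
    rw [affineIndependent_iff_not_collinear, range_triple]
    exact hnc
  set T : Affine.Simplex ℝ E 2 := ⟨![p₀, p₁, p₂], hai⟩ with hT
  set o : E := T.circumcenter with hoo
  set r : ℝ := T.circumradius with hrr
  have hd0 : dist p₀ o = r := by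
    have := T.dist_circumcenter_eq_circumradius 0
    simpa [hT] using this
  have hd1 : dist p₁ o = r := by
    have := T.dist_circumcenter_eq_circumradius 1
    simpa [hT] using this
  have hd2 : dist p₂ o = r := by
    have := T.dist_circumcenter_eq_circumradius 2
    simpa [hT] using this
  have hr0 : 0 ≤ r := by rw [← hd0]; exact dist_nonneg
  have circ : ∀ pt : E, dist pt o = r → ‖pt‖ ^ 2 - 2 * (inner ℝ pt o : ℝ) + ‖o‖ ^ 2 = r ^ 2 := by
    intro pt hpt
    rw [← norm_sub_sq_real, ← dist_eq_norm, hpt]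
  have e0 := circ p₀ hd0
  have e1 := circ p₁ hd1
  have e2 := circ p₂ hd2
  constructor
  · refine ⟨o, r, ?_⟩
    intro p hp
    obtain ⟨a, b, hfst, hsnd⟩ := key p hp
    have hip : (inner ℝ p o : ℝ) - (inner ℝ p₀ o : ℝ)
        = a * ((inner ℝ p₁ o : ℝ) - (inner ℝ p₀ o : ℝ))
          + b * ((inner ℝ p₂ o : ℝ) - (inner ℝ p₀ o : ℝ)) := by
      have hcongr := congrArg (fun v : E => (inner ℝ v o : ℝ)) hfst
      simpa [inner_sub_left, inner_add_left, real_inner_smul_left, mul_sub] using hcongr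
    have hno : ‖p - o‖ ^ 2 = ‖p‖ ^ 2 - 2 * (inner ℝ p o : ℝ) + ‖o‖ ^ 2 := norm_sub_sq_real p o
    have hsq : dist p o ^ 2 = r ^ 2 := by
      rw [dist_eq_norm]
      linear_combination hno + hsnd - 2 * hip + (1 - a - b) * e0 + a * e1 + b * e2
    have hfac : (dist p o - r) * (dist p o + r) = 0 := by linear_combination hsq
    rcases mul_eq_zero.mp hfac with hzz | hzz
    · linarith
    · have := dist_nonneg (x := p) (y := o)
      linarith
  · show Module.rank ℝ (vectorSpan ℝ s) ≤ 2
    rw [vectorSpan_eq_span_vsub_set_right ℝ h₀]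
    have hle : Submodule.span ℝ ((fun x => x -ᵥ p₀) '' s)
        ≤ Submodule.span ℝ ({p₁ - p₀, p₂ - p₀} : Set E) := by
      rw [Submodule.span_le]
      rintro x ⟨p, hp, rfl⟩
      obtain ⟨a, b, hfst, -⟩ := key p hp
      exact Submodule.mem_span_pair.mpr ⟨a, b, by rw [← hfst]; simp [vsub_eq_sub]⟩
    exact (Submodule.rank_mono hle).trans (rank_span_pair_le' _ _)

lemma parLift_image_quad (a b c d : E) :
    parLift '' ({a, b, c, d} : Set E) = {parLift a, parLift b, parLift c, parLift d} := by
  simp [Set.image_insert_eq]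

/-- One direction of the hexahedron theorem, for a labelled cube. -/
lemma hex_direction (g g₁ g₂ g₃ g₁₂ g₁₃ g₂₃ g₁₂₃ : E)
    (hface1 : Concyclic ({g, g₁, g₁₂, g₂} : Set E))
    (hface2 : Concyclic ({g, g₂, g₂₃, g₃} : Set E))
    (hface3 : Concyclic ({g, g₁, g₁₃, g₃} : Set E))
    (hface4 : Concyclic ({g₁, g₁₂, g₁₂₃, g₁₃} : Set E))
    (hface5 : Concyclic ({g₂, g₁₂, g₁₂₃, g₂₃} : Set E))
    (hface6 : Concyclic ({g₃, g₁₃, g₁₂₃, g₂₃} : Set E))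
    (hn12 : ¬ Collinear ℝ ({g, g₁, g₂} : Set E))
    (hn13 : ¬ Collinear ℝ ({g, g₁, g₃} : Set E))
    (hn23 : ¬ Collinear ℝ ({g, g₂, g₃} : Set E))
    (hnA : ¬ Collinear ℝ ({g₁, g₁₂, g₁₃} : Set E))
    (hQ1 : ¬ Collinear ℝ ({g₁, g₂, g₁₂} : Set E))
    (hQ2 : ¬ Collinear ℝ ({g₁, g₃, g₁₃} : Set E))
    (hQ3 : ¬ Collinear ℝ ({g₂, g₃, g₂₃} : Set E))
    (hnB : ¬ Collinear ℝ ({g, g₁₂, g₁₃} : Set E))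
    (hnotall : ¬ Concyclic ({g, g₁, g₂, g₃, g₁₂, g₁₃, g₂₃, g₁₂₃} : Set E))
    (hwhite : Concyclic ({g₁, g₂, g₃, g₁₂₃} : Set E)) :
    Concyclic ({g, g₁₂, g₁₃, g₂₃} : Set E) := by
  have L1 : Coplanar ℝ ({parLift g, parLift g₁, parLift g₁₂, parLift g₂} : Set (E × ℝ)) := by
    have := concyclic_coplanar_lift hface1
    rwa [parLift_image_quad] at this
  have L2 : Coplanar ℝ ({parLift g, parLift g₂, parLift g₂₃, parLift g₃} : Set (E × ℝ)) := by
    have := concyclic_coplanar_lift hface2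
    rwa [parLift_image_quad] at this
  have L3 : Coplanar ℝ ({parLift g, parLift g₁, parLift g₁₃, parLift g₃} : Set (E × ℝ)) := by
    have := concyclic_coplanar_lift hface3
    rwa [parLift_image_quad] at this
  have L4 : Coplanar ℝ ({parLift g₁, parLift g₁₂, parLift g₁₂₃, parLift g₁₃} : Set (E × ℝ)) := by
    have := concyclic_coplanar_lift hface4
    rwa [parLift_image_quad] at this
  have L5 : Coplanar ℝ ({parLift g₂, parLift g₁₂, parLift g₁₂₃, parLift g₂₃} : Set (E × ℝ)) := by
    have := concyclic_coplanar_lift hface5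
    rwa [parLift_image_quad] at this
  have L6 : Coplanar ℝ ({parLift g₃, parLift g₁₃, parLift g₁₂₃, parLift g₂₃} : Set (E × ℝ)) := by
    have := concyclic_coplanar_lift hface6
    rwa [parLift_image_quad] at this
  have LW : Coplanar ℝ ({parLift g₁, parLift g₂, parLift g₃, parLift g₁₂₃} : Set (E × ℝ)) := by
    have := concyclic_coplanar_lift hwhite
    rwa [parLift_image_quad] at this
  have Lnotall : ¬ Coplanar ℝ ({parLift g, parLift g₁, parLift g₂, parLift g₃,
      parLift g₁₂, parLift g₁₃, parLift g₂₃, parLift g₁₂₃} : Set (E × ℝ)) := by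
    intro hcop
    apply hnotall
    apply concyclic_of_coplanar_lift _ g g₁ g₂ (by simp) (by simp) (by simp) hn12
    have himg : parLift '' ({g, g₁, g₂, g₃, g₁₂, g₁₃, g₂₃, g₁₂₃} : Set E)
        = {parLift g, parLift g₁, parLift g₂, parLift g₃,
            parLift g₁₂, parLift g₁₃, parLift g₂₃, parLift g₁₂₃} := by
      simp [Set.image_insert_eq]
    rwa [himg]
  have hblack := cube_F (parLift g) (parLift g₁) (parLift g₂) (parLift g₃)
    (parLift g₁₂) (parLift g₁₃) (parLift g₂₃) (parLift g₁₂₃)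
    L1 L2 L3 L4 L5 L6
    (not_collinear_lift hn12) (not_collinear_lift hn13) (not_collinear_lift hn23)
    (not_collinear_lift hnA) (not_collinear_lift hQ1) (not_collinear_lift hQ2)
    (not_collinear_lift hQ3) Lnotall LW
  apply concyclic_of_coplanar_lift _ g g₁₂ g₁₃ (by simp) (by simp) (by simp) hnB
  rwa [parLift_image_quad]

end Lift

lemma quad_cdab {α : Type*} (a b c d : α) : ({a, b, c, d} : Set α) = {c, d, a, b} := by
  ext w; simp; tauto

lemma quad_rev {α : Type*} (a b c d : α) : ({a, b, c, d} : Set α) = {d, c, b, a} := by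
  ext w; simp; tauto

lemma oct_rev {α : Type*} (a b c d e f g h : α) :
    ({a, b, c, d, e, f, g, h} : Set α) = {h, g, f, e, d, c, b, a} := by
  ext w; simp; tauto

set_option maxHeartbeats 1000000 in
/-- Multidimensional discrete isothermic nets: hexahedron characterization.
For an elementary hexahedron of a circular net (all six faces concyclic,
vertices in general position), the four black vertices `f, f₁₂, f₁₃, f₂₃`
are concyclic iff the four white vertices `f₁, f₂, f₃, f₁₂₃` are concyclic. -/
theorem isothermic_hexahedron (N : ℕ) (hN : 3 ≤ N)
    (f f₁ f₂ f₃ f₁₂ f₁₃ f₂₃ f₁₂₃ : EuclideanSpace ℝ (Fin N))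
    (hdist : List.Pairwise (· ≠ ·) [f, f₁, f₂, f₃, f₁₂, f₁₃, f₂₃, f₁₂₃])
    (hface1 : Concyclic ({f, f₁, f₁₂, f₂} : Set (EuclideanSpace ℝ (Fin N))))
    (hface2 : Concyclic ({f, f₂, f₂₃, f₃} : Set (EuclideanSpace ℝ (Fin N))))
    (hface3 : Concyclic ({f, f₁, f₁₃, f₃} : Set (EuclideanSpace ℝ (Fin N))))
    (hface4 : Concyclic ({f₁, f₁₂, f₁₂₃, f₁₃} : Set (EuclideanSpace ℝ (Fin N))))
    (hface5 : Concyclic ({f₂, f₁₂, f₁₂₃, f₂₃} : Set (EuclideanSpace ℝ (Fin N))))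
    (hface6 : Concyclic ({f₃, f₁₃, f₁₂₃, f₂₃} : Set (EuclideanSpace ℝ (Fin N))))
    (hno3 : ∀ x ∈ ({f, f₁, f₂, f₃, f₁₂, f₁₃, f₂₃, f₁₂₃} : Set (EuclideanSpace ℝ (Fin N))),
      ∀ y ∈ ({f, f₁, f₂, f₃, f₁₂, f₁₃, f₂₃, f₁₂₃} : Set (EuclideanSpace ℝ (Fin N))),
      ∀ z ∈ ({f, f₁, f₂, f₃, f₁₂, f₁₃, f₂₃, f₁₂₃} : Set (EuclideanSpace ℝ (Fin N))),
        x ≠ y → x ≠ z → y ≠ z →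
          ¬ Collinear ℝ ({x, y, z} : Set (EuclideanSpace ℝ (Fin N))))
    (hnotall : ¬ Concyclic
      ({f, f₁, f₂, f₃, f₁₂, f₁₃, f₂₃, f₁₂₃} : Set (EuclideanSpace ℝ (Fin N)))) :
    Concyclic ({f, f₁₂, f₁₃, f₂₃} : Set (EuclideanSpace ℝ (Fin N))) ↔
      Concyclic ({f₁, f₂, f₃, f₁₂₃} : Set (EuclideanSpace ℝ (Fin N))) := by
  simp only [List.pairwise_cons, List.mem_cons, List.not_mem_nil, List.mem_singleton,
    forall_eq_or_imp, forall_eq, List.Pairwise.nil] at hdist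
  obtain ⟨⟨d01, d02, d03, d04, d05, d06, d07, -⟩, ⟨d12, d13, d14, d15, d16, d17, -⟩,
    ⟨d23, d24, d25, d26, d27, -⟩, ⟨d34, d35, d36, d37, -⟩, ⟨d45, d46, d47, -⟩,
    ⟨d56, d57, -⟩, ⟨d67, -⟩, -⟩ := hdist
  constructor
  · -- black → white: apply `hex_direction` to the centrally-relabelled cube
    intro hblack
    have A1 : Concyclic ({f₁₂₃, f₂₃, f₃, f₁₃} : Set (EuclideanSpace ℝ (Fin N))) := by
      rw [quad_cdab f₁₂₃ f₂₃ f₃ f₁₃]; exact hface6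
    have A2 : Concyclic ({f₁₂₃, f₁₃, f₁, f₁₂} : Set (EuclideanSpace ℝ (Fin N))) := by
      rw [quad_cdab f₁₂₃ f₁₃ f₁ f₁₂]; exact hface4
    have A3 : Concyclic ({f₁₂₃, f₂₃, f₂, f₁₂} : Set (EuclideanSpace ℝ (Fin N))) := by
      rw [quad_cdab f₁₂₃ f₂₃ f₂ f₁₂]; exact hface5
    have A4 : Concyclic ({f₂₃, f₃, f, f₂} : Set (EuclideanSpace ℝ (Fin N))) := by
      rw [quad_cdab f₂₃ f₃ f f₂]; exact hface2
    have A5 : Concyclic ({f₁₃, f₃, f, f₁} : Set (EuclideanSpace ℝ (Fin N))) := by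
      rw [quad_cdab f₁₃ f₃ f f₁]; exact hface3
    have A6 : Concyclic ({f₁₂, f₂, f, f₁} : Set (EuclideanSpace ℝ (Fin N))) := by
      rw [quad_cdab f₁₂ f₂ f f₁]; exact hface1
    have hnotall' : ¬ Concyclic
        ({f₁₂₃, f₂₃, f₁₃, f₁₂, f₃, f₂, f₁, f} : Set (EuclideanSpace ℝ (Fin N))) := by
      intro hcc
      apply hnotall
      rw [oct_rev f f₁ f₂ f₃ f₁₂ f₁₃ f₂₃ f₁₂₃]; exact hcc
    have hwhite' : Concyclic ({f₂₃, f₁₃, f₁₂, f} : Set (EuclideanSpace ℝ (Fin N))) := by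
      rw [quad_rev f₂₃ f₁₃ f₁₂ f]; exact hblack
    have hres := hex_direction f₁₂₃ f₂₃ f₁₃ f₁₂ f₃ f₂ f₁ f A1 A2 A3 A4 A5 A6
      (hno3 f₁₂₃ (by simp) f₂₃ (by simp) f₁₃ (by simp) d67.symm d57.symm d56.symm)
      (hno3 f₁₂₃ (by simp) f₂₃ (by simp) f₁₂ (by simp) d67.symm d47.symm d46.symm)
      (hno3 f₁₂₃ (by simp) f₁₃ (by simp) f₁₂ (by simp) d57.symm d47.symm d45.symm)
      (hno3 f₂₃ (by simp) f₃ (by simp) f₂ (by simp) d36.symm d26.symm d23.symm)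
      (hno3 f₂₃ (by simp) f₁₃ (by simp) f₃ (by simp) d56.symm d36.symm d35.symm)
      (hno3 f₂₃ (by simp) f₁₂ (by simp) f₂ (by simp) d46.symm d26.symm d24.symm)
      (hno3 f₁₃ (by simp) f₁₂ (by simp) f₁ (by simp) d45.symm d15.symm d14.symm)
      (hno3 f₁₂₃ (by simp) f₃ (by simp) f₂ (by simp) d37.symm d27.symm d23.symm)
      hnotall' hwhite'
    rw [quad_rev f₁ f₂ f₃ f₁₂₃]; exact hres
  · -- white → black: apply `hex_direction` directly
    intro hwhite
    exact hex_direction f f₁ f₂ f₃ f₁₂ f₁₃ f₂₃ f₁₂₃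
      hface1 hface2 hface3 hface4 hface5 hface6
      (hno3 f (by simp) f₁ (by simp) f₂ (by simp) d01 d02 d12)
      (hno3 f (by simp) f₁ (by simp) f₃ (by simp) d01 d03 d13)
      (hno3 f (by simp) f₂ (by simp) f₃ (by simp) d02 d03 d23)
      (hno3 f₁ (by simp) f₁₂ (by simp) f₁₃ (by simp) d14 d15 d45)
      (hno3 f₁ (by simp) f₂ (by simp) f₁₂ (by simp) d12 d14 d24)
      (hno3 f₁ (by simp) f₃ (by simp) f₁₃ (by simp) d13 d15 d35)
      (hno3 f₂ (by simp) f₃ (by simp) f₂₃ (by simp) d23 d26 d36)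
      (hno3 f (by simp) f₁₂ (by simp) f₁₃ (by simp) d04 d05 d45)
      hnotall hwhite
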